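/- For every positive integer n, the assignment t ↦ f_t, where f_t(c^i, c^j) := (∏_{p=0}^{i-1} t(c^p)) · (∏_{q=0}^{j-1} t(c^q)) · (∏_{r=0}^{i+j-1} t(c^r)) for i, j = 1, …, n, is a bijection from the set U(C_n, C_2) of unitary maps C_n → C_2 onto the set Z²(C_n, C_2) of normalized 2-cocycles; its inverse sends a normalized 2-cocycle f to the unitary map t_f given by t_f(c^j) := f(c, c^j). -/

import Mathlib

open Finset

abbrev Cyc (n : ℕ) := Multiplicative (ZMod n)

def cg (n : ℕ) : Cyc n := Multiplicative.ofAdd (1 : ZMod n)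

def fNat (n : ℕ) (t : Cyc n → Cyc 2) (i j : ℕ) : Cyc 2 :=
  (∏ p ∈ Finset.range i, t (cg n ^ p)) * (∏ q ∈ Finset.range j, t (cg n ^ q)) *
    ∏ r ∈ Finset.range (i + j), t (cg n ^ r)

def fT (n : ℕ) (t : Cyc n → Cyc 2) (a b : Cyc n) : Cyc 2 :=
  fNat n t (Multiplicative.toAdd a).val (Multiplicative.toAdd b).val

noncomputable def sigmaT (n : ℕ) (t : Cyc n → Cyc 2) (j : ℕ) : ℕ :=
  if j ≤ 1 then 0
  else (if Even j then 1 else 0) + ∑ p ∈ Finset.Ico 1 j, orderOf (t (cg n ^ p))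

def IsCocycle {n : ℕ} (f : Cyc n → Cyc n → Cyc 2) : Prop :=
  (∀ h, f 1 h = 1) ∧ (∀ h, f h 1 = 1) ∧
    ∀ a b d, f a b * f (a * b) d = f b d * f a (b * d)

def CS (n : ℕ) (k : Type*) [Field k] : Set ((Cyc n → Cyc 2) × k) :=
  {P | P.1 1 = 1 ∧ P.2 ≠ 0 ∧ P.2 ^ n = (-1 : k) ^ sigmaT n P.1 n}

def cocCond (n : ℕ) (t t' r : Cyc n → Cyc 2) (s : ℕ) : Prop :=
  ∀ i ∈ Finset.Icc 1 n, ∀ j ∈ Finset.Icc 1 n,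
    (∏ p ∈ Finset.range i, t (cg n ^ p) * t (cg n ^ (p + j))) =
      r (cg n ^ i) * r (cg n ^ j) * r (cg n ^ (i + j)) *
        ∏ q ∈ Finset.range (i * s), t' (cg n ^ q) * t' (cg n ^ (q + j * s))

def ApproxRel (n : ℕ) {k : Type*} [Field k] (P Q : (Cyc n → Cyc 2) × k) : Prop :=
  ∃ r : Cyc n → Cyc 2, r 1 = 1 ∧
    (∀ i ∈ Finset.Icc 1 n, ∀ j ∈ Finset.Icc 1 n,
      (∏ p ∈ Finset.range i, P.1 (cg n ^ p) * P.1 (cg n ^ (p + j))) =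
        r (cg n ^ i) * r (cg n ^ j) * r (cg n ^ (i + j)) *
          ∏ q ∈ Finset.range i, Q.1 (cg n ^ q) * Q.1 (cg n ^ (q + j))) ∧
    (∀ i ∈ Finset.Icc 1 n,
      (-1 : k) ^ (1 + sigmaT n P.1 i + orderOf (r (cg n ^ i))) * P.2 ^ i =
        (-1 : k) ^ sigmaT n Q.1 i * Q.2 ^ i)

def EquivRel (n : ℕ) {k : Type*} [Field k] (P Q : (Cyc n → Cyc 2) × k) : Prop :=
  ∃ β : k, ∃ r : Cyc n → Cyc 2, ∃ s : ℕ,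
    β ≠ 0 ∧ r 1 = 1 ∧ 1 ≤ s ∧ s ≤ n - 1 ∧ Nat.gcd s n = 1 ∧
    cocCond n P.1 Q.1 r s ∧
    (∀ i ∈ Finset.Icc 1 n,
      (-1 : k) ^ (1 + sigmaT n P.1 i + orderOf (r (cg n ^ i))) * P.2 ^ i * β =
        (-1 : k) ^ sigmaT n Q.1 (i * s) * Q.2 ^ (i * s))

lemma c2_sq (x : Cyc 2) : x * x = 1 := by revert x; decide
lemma cg_pow (n m : ℕ) : cg n ^ m = Multiplicative.ofAdd (m : ZMod n) := by
  simp [cg, ← ofAdd_nsmul, nsmul_eq_mul]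
lemma cg_pow_val {n : ℕ} [NeZero n] (x : Cyc n) :
    cg n ^ (Multiplicative.toAdd x).val = x := by
  rw [cg_pow]; simp [ZMod.natCast_val, ZMod.cast_id]
lemma val_cg_pow {n : ℕ} [NeZero n] (m : ℕ) :
    (Multiplicative.toAdd (cg n ^ m)).val = m % n := by
  rw [cg_pow]; simp [ZMod.val_natCast]
open Finset
def Afun (n : ℕ) (t : Cyc n → Cyc 2) (m : ℕ) : Cyc 2 := ∏ p ∈ Finset.range m, t (cg n ^ p)

lemma prod_range_univ {n : ℕ} [NeZero n] (g : Cyc n → Cyc 2) :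
    ∏ p ∈ Finset.range n, g (cg n ^ p) = ∏ x : Cyc n, g x := by
  refine Finset.prod_bij' (fun p _ => cg n ^ p) (fun x _ => (Multiplicative.toAdd x).val)
    (fun p _ => Finset.mem_univ _) (fun x _ => Finset.mem_range.2 (ZMod.val_lt _))
    ?_ ?_ ?_
  · intro p hp
    rw [val_cg_pow, Nat.mod_eq_of_lt (Finset.mem_range.1 hp)]
  · intro x _; exact cg_pow_val x
  · intro p _; rfl

lemma block {n : ℕ} [NeZero n] (t : Cyc n → Cyc 2) (a : ℕ) :
    ∏ p ∈ Finset.range n, t (cg n ^ (a + p)) = Afun n t n := by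
  have h1 : ∀ p : ℕ, t (cg n ^ (a + p)) = (fun x => t (cg n ^ a * x)) (cg n ^ p) := by
    intro p; simp [pow_add]
  calc ∏ p ∈ Finset.range n, t (cg n ^ (a + p))
      = ∏ p ∈ Finset.range n, (fun x => t (cg n ^ a * x)) (cg n ^ p) := by
        exact Finset.prod_congr rfl fun p _ => h1 p
    _ = ∏ x : Cyc n, (fun x => t (cg n ^ a * x)) x := prod_range_univ (fun x => t (cg n ^ a * x))
    _ = ∏ x : Cyc n, t x := Equiv.prod_comp (Equiv.mulLeft (cg n ^ a)) t
    _ = Afun n t n := (prod_range_univ t).symm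

lemma Afun_add_n {n : ℕ} [NeZero n] (t : Cyc n → Cyc 2) (m : ℕ) :
    Afun n t (m + n) = Afun n t m * Afun n t n := by
  rw [Afun, Finset.prod_range_add, ← block t m]; rfl

lemma Afun_q {n : ℕ} [NeZero n] (t : Cyc n → Cyc 2) (q r : ℕ) :
    Afun n t (r + q * n) = Afun n t r * (Afun n t n) ^ q := by
  induction q with
  | zero => simp
  | succ q ih =>
      have : r + (q + 1) * n = (r + q * n) + n := by ring
      rw [this, Afun_add_n, ih, pow_succ, mul_assoc]

lemma Afun_mod {n : ℕ} [NeZero n] (t : Cyc n → Cyc 2) (m : ℕ) :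
    Afun n t m = Afun n t (m % n) * (Afun n t n) ^ (m / n) := by
  conv_lhs => rw [← Nat.mod_add_div' m n]
  exact Afun_q t (m / n) (m % n)

lemma div_key {n : ℕ} (hn : 0 < n) (m k : ℕ) :
    (m + k) / n = (m % n + k) / n + m / n := by
  conv_lhs => rw [← Nat.mod_add_div' m n]
  rw [show m % n + m / n * n + k = (m % n + k) + (m / n) * n by ring,
    Nat.add_mul_div_right _ _ hn]
lemma fNat_master {n : ℕ} [NeZero n] (t : Cyc n → Cyc 2) (i j : ℕ) :
    fNat n t i j = Afun n t i * Afun n t j * Afun n t ((i + j) % n)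
      * (Afun n t n) ^ ((i + j) / n) := by
  rw [fNat, show (∏ r ∈ Finset.range (i+j), t (cg n ^ r)) = Afun n t (i+j) from rfl,
    Afun_mod t (i+j), ← mul_assoc]; rfl

lemma c2_core : ∀ (x y z u v m P1 P2 P3 P4 : Cyc 2), P1 * P2 = P3 * P4 →
    (x * y * u * P1) * (u * z * m * P2) = (y * z * v * P3) * (x * v * m * P4) := by decide

lemma fT_isCocycle {n : ℕ} (hn : 0 < n) (t : Cyc n → Cyc 2) : IsCocycle (fT n t) := by
  haveI : NeZero n := ⟨hn.ne'⟩
  refine ⟨fun h => ?_, fun h => ?_, fun a b d => ?_⟩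
  · simp [fT, fNat, c2_sq]
  · simp [fT, fNat, c2_sq]
  · set i := (Multiplicative.toAdd a).val with hi
    set j := (Multiplicative.toAdd b).val with hj
    set k := (Multiplicative.toAdd d).val with hk
    have hab : (Multiplicative.toAdd (a * b)).val = (i + j) % n := by
      rw [toAdd_mul, ZMod.val_add]
    have hbd : (Multiplicative.toAdd (b * d)).val = (j + k) % n := by
      rw [toAdd_mul, ZMod.val_add]
    show fNat n t i j * fNat n t ((Multiplicative.toAdd (a*b)).val) k
        = fNat n t j k * fNat n t i ((Multiplicative.toAdd (b*d)).val)
    rw [hab, hbd, fNat_master, fNat_master, fNat_master, fNat_master]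
    have e1 : ((i + j) % n + k) % n = (i + j + k) % n := Nat.mod_add_mod _ _ _
    have e2 : (i + (j + k) % n) % n = (i + j + k) % n := by
      rw [Nat.add_mod_mod, ← add_assoc]
    rw [e1, e2]
    have hq : (Afun n t n) ^ ((i + j) / n) * (Afun n t n) ^ (((i + j) % n + k) / n)
        = (Afun n t n) ^ ((j + k) / n) * (Afun n t n) ^ ((i + (j + k) % n) / n) := by
      rw [← pow_add, ← pow_add]
      congr 1
      have d1 := div_key hn (i + j) k
      have d2 := div_key hn (j + k) i
      rw [show j + k + i = i + j + k from by ring] at d2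
      have : i + (j + k) % n = (j + k) % n + i := by omega
      rw [this]
      omega
    exact c2_core _ _ _ _ _ _ _ _ _ _ hq
lemma c2_inv_cancel : ∀ x y : Cyc 2, x * (x * y) = y := by decide
lemma c2_rearr : ∀ a b c d e : Cyc 2, a * e * b * (c * d) = e * (a * b * c * d) := by decide

lemma claim_inv {n : ℕ} (f : Cyc n → Cyc n → Cyc 2) (hf : IsCocycle f) :
    ∀ i j : ℕ, fNat n (fun a => f (cg n) a) i j = f (cg n ^ i) (cg n ^ j) := by
  intro i
  induction i with
  | zero => intro j; simp [fNat, c2_sq, hf.1]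
  | succ i ih =>
      intro j
      have hc := hf.2.2 (cg n) (cg n ^ i) (cg n ^ j)
      rw [← pow_succ', ← pow_add] at hc
      have key : f (cg n ^ (i + 1)) (cg n ^ j)
          = f (cg n) (cg n ^ i) * (f (cg n ^ i) (cg n ^ j) * f (cg n) (cg n ^ (i + j))) := by
        rw [← hc, c2_inv_cancel]
      rw [key, ← ih j]
      show (∏ p ∈ Finset.range (i+1), f (cg n) (cg n ^ p)) *
          (∏ q ∈ Finset.range j, f (cg n) (cg n ^ q)) *
          (∏ r ∈ Finset.range (i + 1 + j), f (cg n) (cg n ^ r)) = _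
      rw [Finset.prod_range_succ, show i + 1 + j = (i + j) + 1 from by ring,
        Finset.prod_range_succ]
      rw [fNat]
      exact c2_rearr _ _ _ _ _

lemma left_claim {n : ℕ} (hn : 0 < n) (t : Cyc n → Cyc 2) (ht : t 1 = 1) (a : Cyc n) :
    fT n t (cg n) a = t a := by
  haveI : NeZero n := ⟨hn.ne'⟩
  have hval : (Multiplicative.toAdd (cg n)).val = 1 % n := by
    show (1 : ZMod n).val = 1 % n
    exact ZMod.val_one_eq_one_mod n
  rw [fT, hval]
  rcases eq_or_lt_of_le (Nat.succ_le_of_lt hn) with h1 | h2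
  · -- n = 1
    have hn1 : n = 1 := h1.symm
    subst hn1
    have ha : a = 1 := Subsingleton.elim _ _
    have hv : (Multiplicative.toAdd a).val = 0 := by
      rw [ha]; simp
    rw [hv, ha, ht]
    simp [fNat]
  · -- n ≥ 2
    have h1n : 1 % n = 1 := Nat.mod_eq_of_lt h2
    rw [h1n, fNat]
    have hA1 : (∏ p ∈ Finset.range 1, t (cg n ^ p)) = 1 := by
      simp [ht]
    rw [hA1, one_mul, show 1 + (Multiplicative.toAdd a).val
      = (Multiplicative.toAdd a).val + 1 from by ring, Finset.prod_range_succ,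
      ← mul_assoc, c2_sq, one_mul, cg_pow_val]

theorem stmt3 (n : ℕ) (hn : 0 < n) :
    ∃ e : {t : Cyc n → Cyc 2 // t 1 = 1} ≃ {f : Cyc n → Cyc n → Cyc 2 // IsCocycle f},
      (∀ t, (e t).1 = fT n t.1) ∧
      (∀ f, (e.symm f).1 = fun a => f.1 (cg n) a) := by
  haveI : NeZero n := ⟨hn.ne'⟩
  refine ⟨⟨fun t => ⟨fT n t.1, fT_isCocycle hn t.1⟩,
          fun f => ⟨fun a => f.1 (cg n) a, f.2.2.1 (cg n)⟩, ?_, ?_⟩, fun t => rfl, fun f => rfl⟩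
  · intro t
    apply Subtype.ext
    funext a
    exact left_claim hn t.1 t.2 a
  · intro f
    apply Subtype.ext
    funext a b
    show fT n (fun x => f.1 (cg n) x) a b = f.1 a b
    rw [fT, claim_inv f.1 f.2, cg_pow_val, cg_pow_val]
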